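/- arXiv:2602.06250 — 2 statements merged into one kernel-verified Lean document; each statement's English description precedes it below -/
import Mathlib

section
/- Let D ⊂ R^d be a bounded Lipschitz domain, n ∈ L^∞(D) with n_* := ess-inf_D n > 1, and set γ := 1/(n^* − 1) with n^* := ess-sup_D n. If 0 < τ < λ₁(D)/n^*, then for every u ∈ H^2_0(D) with u ≠ 0, ∫_D (1/(n−1)) |Δu + τu|² dx + τ² ∫_D |u|² dx − τ ∫_D |∇u|² dx > 0. Consequently, no k > 0 with k² < λ₁(D)/n^* is a transmission eigenvalue. -/
open MeasureTheory Function

/-- The Laplacian of a function on `ℝ^d`, written via iterated directional derivatives. -/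
noncomputable def lap (d : ℕ) (u : (Fin d → ℝ) → ℝ) (x : Fin d → ℝ) : ℝ :=
  ∑ i, fderiv ℝ (fun y => fderiv ℝ u y (Pi.single i 1)) x (Pi.single i 1)


variable {d : ℕ} {u : (Fin d → ℝ) → ℝ}

lemma contDiff_u1 (hu : ContDiff ℝ (⊤ : ℕ∞) u) (i : Fin d) :
    ContDiff ℝ (⊤ : ℕ∞) (fun x => fderiv ℝ u x (Pi.single i 1)) :=
  (hu.fderiv_right (by simp)).clm_apply contDiff_const

lemma support_u1_subset (i : Fin d) :
    support (fun x => fderiv ℝ u x (Pi.single i 1)) ⊆ tsupport u := by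
  intro x hx
  have : fderiv ℝ u x ≠ 0 := fun h => hx (by simp [h])
  exact support_fderiv_subset ℝ this

lemma tsupport_u1_subset (i : Fin d) :
    tsupport (fun x => fderiv ℝ u x (Pi.single i 1)) ⊆ tsupport u :=
  closure_minimal (support_u1_subset i) (isClosed_tsupport u)

lemma hcs_u1 (hc : HasCompactSupport u) (i : Fin d) :
    HasCompactSupport (fun x => fderiv ℝ u x (Pi.single i 1)) :=
  hc.mono' (support_u1_subset i)

lemma support_lap_subset : support (lap d u) ⊆ tsupport u := by
  intro x hx
  by_contra hxt
  apply hx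
  show lap d u x = 0
  unfold lap
  apply Finset.sum_eq_zero
  intro i _
  have h0 : fderiv ℝ (fun y => fderiv ℝ u y (Pi.single i 1)) x = 0 := by
    by_contra h
    exact hxt (tsupport_u1_subset i (support_fderiv_subset ℝ h))
  simp [h0]

lemma continuous_lap (hu : ContDiff ℝ (⊤ : ℕ∞) u) : Continuous (lap d u) := by
  unfold lap
  exact continuous_finset_sum _ fun i _ =>
    (((contDiff_u1 hu i).continuous_fderiv (by simp))).clm_apply continuous_const

lemma hcs_lap (hc : HasCompactSupport u) : HasCompactSupport (lap d u) :=
  hc.mono' support_lap_subset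

lemma ibp (hu : ContDiff ℝ (⊤ : ℕ∞) u) (hc : HasCompactSupport u) :
    ∫ x, u x * lap d u x = - ∫ x, ∑ i, (fderiv ℝ u x (Pi.single i 1)) ^ 2 := by
  have hud : Differentiable ℝ u := hu.differentiable (by simp)
  have key : ∀ i : Fin d,
      ∫ x, u x * fderiv ℝ (fun y => fderiv ℝ u y (Pi.single i 1)) x (Pi.single i 1)
        = - ∫ x, (fderiv ℝ u x (Pi.single i 1)) ^ 2 := by
    intro i
    have hu1 := contDiff_u1 hu i
    have hcs1 := hcs_u1 hc i
    have c1 : Continuous fun x => fderiv ℝ u x (Pi.single i 1) := hu1.continuous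
    have c2 : Continuous fun x =>
        fderiv ℝ (fun y => fderiv ℝ u y (Pi.single i 1)) x (Pi.single i 1) :=
      (hu1.continuous_fderiv (by simp)).clm_apply continuous_const
    have i1 : Integrable (fun x => fderiv ℝ u x (Pi.single i 1) *
        fderiv ℝ u x (Pi.single i 1)) :=
      (c1.mul c1).integrable_of_hasCompactSupport (hcs1.mul_right)
    have i2 : Integrable (fun x => u x *
        fderiv ℝ (fun y => fderiv ℝ u y (Pi.single i 1)) x (Pi.single i 1)) :=
      (hu.continuous.mul c2).integrable_of_hasCompactSupport (hc.mul_right)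
    have i3 : Integrable (fun x => u x * fderiv ℝ u x (Pi.single i 1)) :=
      (hu.continuous.mul c1).integrable_of_hasCompactSupport (hc.mul_right)
    have := integral_mul_fderiv_eq_neg_fderiv_mul_of_integrable
      (f := u) (g := fun y => fderiv ℝ u y (Pi.single i 1)) (v := Pi.single i 1)
      i1 i2 i3 (fun x _ => hud x) (fun x _ => hu1.differentiable (by simp) x)
    rw [this]
    congr 1
    apply integral_congr_ae; filter_upwards with x; ring
  calc ∫ x, u x * lap d u x
      = ∫ x, ∑ i, u x * fderiv ℝ (fun y => fderiv ℝ u y (Pi.single i 1)) x (Pi.single i 1) := by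
        apply integral_congr_ae; filter_upwards with x
        unfold lap; rw [Finset.mul_sum]
    _ = ∑ i, ∫ x, u x * fderiv ℝ (fun y => fderiv ℝ u y (Pi.single i 1)) x (Pi.single i 1) := by
        apply integral_finset_sum
        intro i _
        exact ((hu.continuous.mul (((contDiff_u1 hu i).continuous_fderiv
          (by simp)).clm_apply continuous_const)).integrable_of_hasCompactSupport hc.mul_right)
    _ = ∑ i : Fin d, - ∫ x, (fderiv ℝ u x (Pi.single i 1)) ^ 2 := by
        exact Finset.sum_congr rfl fun i _ => key i
    _ = - ∫ x, ∑ i, (fderiv ℝ u x (Pi.single i 1)) ^ 2 := by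
        have hint : ∀ i ∈ (Finset.univ : Finset (Fin d)), Integrable
            (fun x => (fderiv ℝ u x (Pi.single i 1)) ^ 2) volume := by
          intro i _
          have c1 : Continuous fun x => fderiv ℝ u x (Pi.single i 1) :=
            (contDiff_u1 hu i).continuous
          exact (c1.pow 2).integrable_of_hasCompactSupport
            ((hcs_u1 hc i).mono' (by intro x hx; simp only [mem_support] at hx ⊢
                                     exact subset_tsupport _ (fun h => hx (by simp [h]))))
        rw [integral_finset_sum _ hint, ← Finset.sum_neg_distrib]

/-- Let `D` be a bounded (Lipschitz) domain, `n ∈ L^∞(D)` with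
`n_* = ess-inf n > 1`, `n^* = ess-sup n`.  If `0 < τ < λ₁(D)/n^*` then for every nonzero
`u ∈ H^2_0(D)` (encoded by smooth functions with compact support in `D`),
`∫ (1/(n−1))|Δu + τu|² + τ²∫|u|² − τ∫|∇u|² > 0`.  Consequently no `k > 0` with
`k² < λ₁(D)/n^*` is a transmission eigenvalue. -/
theorem stmt_2 (d : ℕ) (D : Set (Fin d → ℝ)) (hD : IsOpen D)
    (hDbounded : Bornology.IsBounded D)
    (n : (Fin d → ℝ) → ℝ) (hnmeas : Measurable n)
    (nstar Nstar : ℝ) (hnstar : 1 < nstar)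
    (hbounds : ∀ x ∈ D, nstar ≤ n x ∧ n x ≤ Nstar)
    (lam1 : ℝ) (hlam1pos : 0 < lam1)
    (hlam1 : ∀ v : (Fin d → ℝ) → ℝ, ContDiff ℝ (⊤ : ℕ∞) v → HasCompactSupport v →
      tsupport v ⊆ D →
      lam1 * ∫ x in D, (v x) ^ 2 ≤ ∫ x in D, ∑ i, (fderiv ℝ v x (Pi.single i 1)) ^ 2) :
    (∀ τ : ℝ, 0 < τ → τ < lam1 / Nstar →
      ∀ u : (Fin d → ℝ) → ℝ, ContDiff ℝ (⊤ : ℕ∞) u → HasCompactSupport u →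
        tsupport u ⊆ D → u ≠ 0 →
        0 < (∫ x in D, (1 / (n x - 1)) * (lap d u x + τ * u x) ^ 2)
              + τ ^ 2 * (∫ x in D, (u x) ^ 2)
              - τ * ∫ x in D, ∑ i, (fderiv ℝ u x (Pi.single i 1)) ^ 2) ∧
    (∀ k : ℝ, 0 < k → k ^ 2 < lam1 / Nstar →
      ¬ ∃ u : (Fin d → ℝ) → ℝ, ContDiff ℝ (⊤ : ℕ∞) u ∧ HasCompactSupport u ∧
          tsupport u ⊆ D ∧ u ≠ 0 ∧
          (∫ x in D, (1 / (n x - 1)) * (lap d u x + k ^ 2 * u x) ^ 2)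
              + (k ^ 2) ^ 2 * (∫ x in D, (u x) ^ 2)
              - k ^ 2 * ∫ x in D, ∑ i, (fderiv ℝ u x (Pi.single i 1)) ^ 2 = 0) := by
  have hDmeas : MeasurableSet D := hD.measurableSet
  have hDfin : volume D ≠ ⊤ := hDbounded.measure_lt_top.ne
  have main : ∀ τ : ℝ, 0 < τ → τ < lam1 / Nstar →
      ∀ u : (Fin d → ℝ) → ℝ, ContDiff ℝ (⊤ : ℕ∞) u → HasCompactSupport u →
        tsupport u ⊆ D → u ≠ 0 →
        0 < (∫ x in D, (1 / (n x - 1)) * (lap d u x + τ * u x) ^ 2)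
              + τ ^ 2 * (∫ x in D, (u x) ^ 2)
              - τ * ∫ x in D, ∑ i, (fderiv ℝ u x (Pi.single i 1)) ^ 2 := by
    intro τ hτ hτlt u hu hcu hsupp hune
    have hNpos : 0 < Nstar := by
      have h0 : 0 < lam1 / Nstar := hτ.trans hτlt
      rcases div_pos_iff.mp h0 with ⟨_, h⟩ | ⟨h, _⟩
      · exact h
      · linarith
    have hτN : τ * Nstar < lam1 := (lt_div_iff₀ hNpos).mp hτlt
    -- vanishing outside D
    have hu0 : ∀ x, x ∉ D → u x = 0 := fun x hx =>
      image_eq_zero_of_notMem_tsupport fun h => hx (hsupp h)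
    have hlap0 : ∀ x, x ∉ D → lap d u x = 0 := fun x hx => by
      by_contra h; exact hx (hsupp (support_lap_subset h))
    have hu10 : ∀ (i : Fin d) (x), x ∉ D → fderiv ℝ u x (Pi.single i 1) = 0 := by
      intro i x hx; by_contra h; exact hx (hsupp (support_u1_subset i h))
    have clap : Continuous (lap d u) := continuous_lap hu
    -- bounds for u, lap u, n
    obtain ⟨Cu, hCu⟩ := hcu.exists_bound_of_continuous hu.continuous
    obtain ⟨CL, hCL⟩ := (hcs_lap hcu).exists_bound_of_continuous clap
    have hCu0 : 0 ≤ Cu := le_trans (norm_nonneg _) (hCu 0)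
    have hCL0 : 0 ≤ CL := le_trans (norm_nonneg _) (hCL 0)
    set Cn : ℝ := |nstar| + |Nstar| with hCn
    have hCnb : ∀ x ∈ D, |n x| ≤ Cn := by
      intro x hx
      obtain ⟨h1, h2⟩ := hbounds x hx
      rw [abs_le]
      constructor
      · have := neg_abs_le nstar; nlinarith [abs_nonneg Nstar]
      · have := le_abs_self Nstar; nlinarith [abs_nonneg nstar]
    -- integrability facts
    have hint_u2 : Integrable (fun x => u x ^ 2) :=
      (hu.continuous.pow 2).integrable_of_hasCompactSupport
        (hcu.mono' (fun x hx => subset_tsupport _ (fun h => hx (by simp [h]))))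
    have hint_ulap : Integrable (fun x => u x * lap d u x) :=
      (hu.continuous.mul clap).integrable_of_hasCompactSupport hcu.mul_right
    have hint_P : IntegrableOn
        (fun x => (1 / (n x - 1)) * (lap d u x + τ * n x * u x) ^ 2) D := by
      apply Measure.integrableOn_of_bounded hDfin
      · apply Measurable.aestronglyMeasurable
        exact ((hnmeas.sub measurable_const).const_div 1 |>.mul
          (((clap.measurable.add ((measurable_const.mul hnmeas).mul
            hu.continuous.measurable))).pow measurable_const))
      · rw [ae_restrict_iff' hDmeas]
        apply Filter.Eventually.of_forall
        intro x hx
        obtain ⟨h1, h2⟩ := hbounds x hx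
        have hpos : 0 < n x - 1 := by linarith
        have hb1 : 1 / (n x - 1) ≤ 1 / (nstar - 1) := by
          apply one_div_le_one_div_of_le <;> linarith
        have hb2 : |lap d u x + τ * n x * u x| ≤ CL + τ * Cn * Cu := by
          refine (abs_add_le _ _).trans ?_
          have h3 : |τ * n x * u x| ≤ τ * Cn * Cu := by
            rw [abs_mul, abs_mul, abs_of_pos hτ]
            have := hCnb x hx
            have h4 := hCu x
            have h5 : |u x| ≤ Cu := h4
            have hn0 : (0:ℝ) ≤ |n x| := abs_nonneg _
            have h7 : |n x| * |u x| ≤ Cn * Cu :=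
              mul_le_mul (hCnb x hx) h5 (abs_nonneg _) (le_trans (abs_nonneg _) (hCnb x hx))
            rw [mul_assoc, mul_assoc]
            exact mul_le_mul_of_nonneg_left h7 hτ.le
          have := hCL x
          have h6 : |lap d u x| ≤ CL := this
          linarith
        have hsq : (lap d u x + τ * n x * u x) ^ 2 ≤ (CL + τ * Cn * Cu) ^ 2 := by
          have := abs_nonneg (lap d u x + τ * n x * u x)
          nlinarith [sq_abs (lap d u x + τ * n x * u x)]
        rw [Real.norm_eq_abs, abs_mul, abs_of_pos (by positivity : (0:ℝ) < 1 / (n x - 1)),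
          abs_of_nonneg (sq_nonneg _)]
        calc 1 / (n x - 1) * (lap d u x + τ * n x * u x) ^ 2
            ≤ 1 / (nstar - 1) * (CL + τ * Cn * Cu) ^ 2 := by
              have hns : (0:ℝ) < nstar - 1 := by linarith
              apply mul_le_mul hb1 hsq (sq_nonneg _) (by positivity)
          _ ≤ 1 / (nstar - 1) * (CL + τ * Cn * Cu) ^ 2 := le_rfl
    have hint_nu2 : IntegrableOn (fun x => n x * u x ^ 2) D := by
      apply Measure.integrableOn_of_bounded hDfin
      · exact (hnmeas.mul ((hu.continuous.pow 2).measurable)).aestronglyMeasurable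
      · rw [ae_restrict_iff' hDmeas]
        apply Filter.Eventually.of_forall
        intro x hx
        rw [Real.norm_eq_abs, abs_mul]
        have h5 : |u x| ≤ Cu := hCu x
        have := hCnb x hx
        have : |u x ^ 2| ≤ Cu ^ 2 := by
          rw [abs_of_nonneg (sq_nonneg _)]
          nlinarith [abs_nonneg (u x), sq_abs (u x)]
        calc |n x| * |u x ^ 2| ≤ Cn * Cu ^ 2 := by
              nlinarith [abs_nonneg (n x), abs_nonneg (u x ^ 2), hCnb x hx]
          _ ≤ Cn * Cu ^ 2 := le_rfl
    -- set-integral to full-space integral identities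
    have hBeq : ∫ x in D, u x ^ 2 = ∫ x, u x ^ 2 :=
      setIntegral_eq_integral_of_forall_compl_eq_zero fun x hx => by rw [hu0 x hx]; ring
    have hGeq : (∫ x in D, ∑ i, (fderiv ℝ u x (Pi.single i 1)) ^ 2)
        = ∫ x, ∑ i, (fderiv ℝ u x (Pi.single i 1)) ^ 2 :=
      setIntegral_eq_integral_of_forall_compl_eq_zero fun x hx =>
        Finset.sum_eq_zero fun i _ => by rw [hu10 i x hx]; ring
    have hULeq : ∫ x in D, u x * lap d u x = ∫ x, u x * lap d u x :=
      setIntegral_eq_integral_of_forall_compl_eq_zero fun x hx => by rw [hu0 x hx]; ring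
    -- notation
    set B := ∫ x in D, u x ^ 2 with hBdef
    set G := ∫ x in D, ∑ i, (fderiv ℝ u x (Pi.single i 1)) ^ 2 with hGdef
    set N := ∫ x in D, n x * u x ^ 2 with hNdef
    set P := ∫ x in D, (1 / (n x - 1)) * (lap d u x + τ * n x * u x) ^ 2 with hPdef
    -- integration by parts : ∫_D u lap u = -G
    have hIBP : ∫ x in D, u x * lap d u x = -G := by
      rw [hULeq, ibp hu hcu, hGeq]
    -- pointwise identity on D and splitting
    have hA : (∫ x in D, (1 / (n x - 1)) * (lap d u x + τ * u x) ^ 2)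
        = P + ((-2 * τ) * ∫ x in D, u x * lap d u x)
          + ((-(τ ^ 2)) * N + (-(τ ^ 2)) * B) := by
      have hptwise : Set.EqOn (fun x => (1 / (n x - 1)) * (lap d u x + τ * u x) ^ 2)
          (fun x => (1 / (n x - 1)) * (lap d u x + τ * n x * u x) ^ 2
            + ((-2 * τ) * (u x * lap d u x)
            + ((-(τ ^ 2)) * (n x * u x ^ 2) + (-(τ ^ 2)) * (u x ^ 2)))) D := by
        intro x hx
        obtain ⟨h1, _⟩ := hbounds x hx
        have hne : n x - 1 ≠ 0 := by intro h; linarith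
        field_simp
        ring
      have ha : Integrable (fun x => (-2 * τ) * (u x * lap d u x)) (volume.restrict D) :=
        (hint_ulap.integrableOn).const_mul _
      have hb' : Integrable (fun x => (-(τ ^ 2)) * (n x * u x ^ 2)) (volume.restrict D) :=
        hint_nu2.const_mul _
      have hcc : Integrable (fun x => (-(τ ^ 2)) * (u x ^ 2)) (volume.restrict D) :=
        (hint_u2.integrableOn).const_mul _
      have hg2 : Integrable (fun x => (-(τ ^ 2)) * (n x * u x ^ 2)
          + (-(τ ^ 2)) * (u x ^ 2)) (volume.restrict D) := hb'.add hcc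
      have hg1 : Integrable (fun x => (-2 * τ) * (u x * lap d u x)
          + ((-(τ ^ 2)) * (n x * u x ^ 2) + (-(τ ^ 2)) * (u x ^ 2)))
          (volume.restrict D) := ha.add hg2
      rw [setIntegral_congr_fun hDmeas hptwise, integral_add hint_P hg1,
        integral_add ha hg2, integral_add hb' hcc,
        integral_const_mul, integral_const_mul, integral_const_mul]
      rw [hPdef, hNdef, hBdef]; ring
    -- facts for the final inequality
    have hPnn : 0 ≤ P := by
      apply setIntegral_nonneg hDmeas
      intro x hx
      obtain ⟨h1, _⟩ := hbounds x hx
      have : 0 < n x - 1 := by linarith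
      positivity
    have hGB : lam1 * B ≤ G := hlam1 u hu hcu hsupp
    have hNB : N ≤ Nstar * B := by
      have : ∫ x in D, n x * u x ^ 2 ≤ ∫ x in D, Nstar * u x ^ 2 := by
        apply setIntegral_mono_on hint_nu2 ((hint_u2.integrableOn).const_mul _) hDmeas
        intro x hx
        exact mul_le_mul_of_nonneg_right (hbounds x hx).2 (sq_nonneg _)
      rwa [integral_const_mul] at this
    have hBpos : 0 < B := by
      rw [hBeq]
      have hnn : (0 : (Fin d → ℝ) → ℝ) ≤ᵐ[volume] fun x => u x ^ 2 :=
        Filter.Eventually.of_forall fun x => sq_nonneg _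
      rw [integral_pos_iff_support_of_nonneg_ae hnn hint_u2]
      have hss : support (fun x => u x ^ 2) = support u := by
        ext x; simp [pow_eq_zero_iff]
      rw [hss]
      have hop : IsOpen (support u) := by
        rw [support_eq_preimage]
        exact (isOpen_compl_singleton).preimage hu.continuous
      rcases Function.ne_iff.mp hune with ⟨x₀, hx₀⟩
      exact hop.measure_pos volume ⟨x₀, hx₀⟩
    rw [hA, hIBP]
    nlinarith [mul_le_mul_of_nonneg_left hGB hτ.le, mul_le_mul_of_nonneg_left hNB (sq_nonneg τ),
      mul_pos (mul_pos hτ hBpos) (sub_pos.mpr hτN)]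
  refine ⟨main, ?_⟩
  rintro k hk hk2 ⟨u, hu, hc, hs, hne, heq⟩
  have h := main (k ^ 2) (by positivity) hk2 u hu hc hs hne
  rw [heq] at h
  exact lt_irrefl 0 h
end

section
/- Let D = (0,1)² ⊂ R², a ≠ 1 a positive constant, A_D = aI, n_D = a. For integers k₁, k₂, let u_in(x₁,x₂) = cos(k₁πx₁)cos(k₂πx₂) and k = π√(k₁² + k₂²). Then u = 0 solves ∇·(A∇u) + k²nu = ∇·((I−A)∇u_in) + k²(1−n)u_in in R², where A = aI and n = a on D, and A = I, n = 1 outside D; i.e., ∇·((I−A)∇u_in) + k²(1−n)u_in = 0 as a distribution on R². -/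
open MeasureTheory

/-- The open unit square `(0,1)² ⊂ ℝ²`. -/
def unitSq : Set (Fin 2 → ℝ) :=
  {x | x 0 ∈ Set.Ioo (0 : ℝ) 1 ∧ x 1 ∈ Set.Ioo (0 : ℝ) 1}

/-- The incident wave `u_in(x₁,x₂) = cos(k₁πx₁)cos(k₂πx₂)`. -/
noncomputable def uinCos (k1 k2 : ℤ) (x : Fin 2 → ℝ) : ℝ :=
  Real.cos (k1 * Real.pi * x 0) * Real.cos (k2 * Real.pi * x 1)

noncomputable def P (i : Fin 2) : (Fin 2 → ℝ) →L[ℝ] ℝ := ContinuousLinearMap.proj i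

lemma hasFDerivAt_cosLin (c : ℝ) (i : Fin 2) (x : Fin 2 → ℝ) :
    HasFDerivAt (fun y : Fin 2 → ℝ => Real.cos (c * y i))
      ((-(c * Real.sin (c * x i))) • P i) x := by
  have h1 : HasFDerivAt (fun y : Fin 2 → ℝ => c * y i) (c • P i) x :=
    ((ContinuousLinearMap.proj i : (Fin 2 → ℝ) →L[ℝ] ℝ).hasFDerivAt).const_mul c
  have h2 := (Real.hasDerivAt_cos (c * x i)).comp_hasFDerivAt x h1
  refine h2.congr_fderiv ?_
  rw [smul_smul]; ring_nf

lemma hasFDerivAt_sinLin (c : ℝ) (i : Fin 2) (x : Fin 2 → ℝ) :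
    HasFDerivAt (fun y : Fin 2 → ℝ => Real.sin (c * y i))
      ((c * Real.cos (c * x i)) • P i) x := by
  have h1 : HasFDerivAt (fun y : Fin 2 → ℝ => c * y i) (c • P i) x :=
    ((ContinuousLinearMap.proj i : (Fin 2 → ℝ) →L[ℝ] ℝ).hasFDerivAt).const_mul c
  have h2 := (Real.hasDerivAt_sin (c * x i)).comp_hasFDerivAt x h1
  refine h2.congr_fderiv ?_
  rw [smul_smul]; ring_nf

section aux
variable (k1 k2 : ℤ)

/-- gradient components of uinCos -/
noncomputable def gA (x : Fin 2 → ℝ) : ℝ :=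
  -((k1 : ℝ) * Real.pi * Real.sin ((k1 : ℝ) * Real.pi * x 0)) * Real.cos ((k2 : ℝ) * Real.pi * x 1)

noncomputable def gB (x : Fin 2 → ℝ) : ℝ :=
  Real.cos ((k1 : ℝ) * Real.pi * x 0) * -((k2 : ℝ) * Real.pi * Real.sin ((k2 : ℝ) * Real.pi * x 1))

noncomputable def DgA (x : Fin 2 → ℝ) : (Fin 2 → ℝ) →L[ℝ] ℝ :=
  (-(((k1 : ℝ) * Real.pi) ^ 2 * Real.cos ((k1 : ℝ) * Real.pi * x 0) *
      Real.cos ((k2 : ℝ) * Real.pi * x 1))) • P 0 +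
  (((k1 : ℝ) * Real.pi) * ((k2 : ℝ) * Real.pi) * Real.sin ((k1 : ℝ) * Real.pi * x 0) *
      Real.sin ((k2 : ℝ) * Real.pi * x 1)) • P 1

noncomputable def DgB (x : Fin 2 → ℝ) : (Fin 2 → ℝ) →L[ℝ] ℝ :=
  (((k1 : ℝ) * Real.pi) * ((k2 : ℝ) * Real.pi) * Real.sin ((k1 : ℝ) * Real.pi * x 0) *
      Real.sin ((k2 : ℝ) * Real.pi * x 1)) • P 0 +
  (-(((k2 : ℝ) * Real.pi) ^ 2 * Real.cos ((k1 : ℝ) * Real.pi * x 0) *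
      Real.cos ((k2 : ℝ) * Real.pi * x 1))) • P 1

lemma hasFDerivAt_uin (x : Fin 2 → ℝ) :
    HasFDerivAt (uinCos k1 k2) (gA k1 k2 x • P 0 + gB k1 k2 x • P 1) x := by
  have h := (hasFDerivAt_cosLin ((k1 : ℝ) * Real.pi) 0 x).mul
    (hasFDerivAt_cosLin ((k2 : ℝ) * Real.pi) 1 x)
  refine h.congr_fderiv ?_
  unfold gA gB
  module

lemma hasFDerivAt_gA (x : Fin 2 → ℝ) : HasFDerivAt (gA k1 k2) (DgA k1 k2 x) x := by
  have h := (((hasFDerivAt_sinLin ((k1 : ℝ) * Real.pi) 0 x).const_mul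
      ((k1 : ℝ) * Real.pi)).neg).mul (hasFDerivAt_cosLin ((k2 : ℝ) * Real.pi) 1 x)
  refine h.congr_fderiv ?_
  unfold DgA
  simp only [Pi.neg_apply]
  module

lemma hasFDerivAt_gB (x : Fin 2 → ℝ) : HasFDerivAt (gB k1 k2) (DgB k1 k2 x) x := by
  have h := (hasFDerivAt_cosLin ((k1 : ℝ) * Real.pi) 0 x).mul
    (((hasFDerivAt_sinLin ((k2 : ℝ) * Real.pi) 1 x).const_mul ((k2 : ℝ) * Real.pi)).neg)
  refine h.congr_fderiv ?_
  unfold DgB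
  simp only [Pi.neg_apply]
  module

lemma contA : Continuous (gA k1 k2) := by unfold gA; fun_prop
lemma contB : Continuous (gB k1 k2) := by unfold gB; fun_prop

end aux

/-- Let `D = (0,1)²`, `A_D = aI`, `n_D = a` with `a > 0`, `a ≠ 1`. For
integers `k₁, k₂`, `u_in = cos(k₁πx₁)cos(k₂πx₂)` and `k = π√(k₁²+k₂²)`, `u = 0` solves
the non-scattering equation, i.e. `∇·((I−A)∇u_in) + k²(1−n)u_in = 0` as a distribution
on `ℝ²`: for every test function `φ`,
`∫_D (1−a)(−∇u_in·∇φ + k² u_in φ) dx = 0`. -/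
theorem stmt_5 (a : ℝ) (ha : 0 < a) (hne : a ≠ 1) (k1 k2 : ℤ) (k : ℝ)
    (hk : k = Real.pi * Real.sqrt ((k1 : ℝ) ^ 2 + (k2 : ℝ) ^ 2)) :
    ∀ φ : (Fin 2 → ℝ) → ℝ, ContDiff ℝ (⊤ : ℕ∞) φ → HasCompactSupport φ →
      ∫ x in unitSq,
        (1 - a) *
          (-(∑ i, fderiv ℝ (uinCos k1 k2) x (Pi.single i 1) * fderiv ℝ φ x (Pi.single i 1))
            + k ^ 2 * uinCos k1 k2 x * φ x) = 0 := by
  intro φ hφ hφc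
  have hφd : ∀ x, HasFDerivAt φ (fderiv ℝ φ x) x := fun x =>
    (hφ.differentiable (by simp) x).hasFDerivAt
  -- the vector field and its derivative
  set g : Fin 2 → (Fin 2 → ℝ) → ℝ := ![gA k1 k2, gB k1 k2] with hg
  set Dg : Fin 2 → (Fin 2 → ℝ) → (Fin 2 → ℝ) →L[ℝ] ℝ := ![DgA k1 k2, DgB k1 k2] with hDg
  set f : Fin 2 → (Fin 2 → ℝ) → ℝ := fun i x => φ x * g i x with hf
  set f' : Fin 2 → (Fin 2 → ℝ) → (Fin 2 → ℝ) →L[ℝ] ℝ :=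
    fun i x => φ x • Dg i x + g i x • fderiv ℝ φ x with hf'
  have hgd : ∀ (i) (x), HasFDerivAt (g i) (Dg i x) x := by
    intro i x
    fin_cases i
    · exact hasFDerivAt_gA k1 k2 x
    · exact hasFDerivAt_gB k1 k2 x
  have hfd : ∀ (x) (i), HasFDerivAt (f i) (f' i x) x := fun x i => (hφd x).mul (hgd i x)
  have hgc : ∀ i, Continuous (g i) := by
    intro i; fin_cases i
    · show Continuous (gA k1 k2); exact contA k1 k2
    · show Continuous (gB k1 k2); exact contB k1 k2
  -- continuity of partial derivatives of φ
  have hφ' : ∀ v : Fin 2 → ℝ, Continuous fun x => fderiv ℝ φ x v := by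
    intro v
    exact (hφ.continuous_fderiv (by simp)).clm_apply continuous_const
  -- divergence theorem
  have hab : (fun _ : Fin 2 => (0 : ℝ)) ≤ fun _ => 1 := fun _ => zero_le_one
  have hdiv := integral_divergence_of_hasFDerivAt_off_countable'
    (fun _ : Fin 2 => (0 : ℝ)) (fun _ => 1) hab f f' ∅ Set.countable_empty
    (fun i => ((hφ.continuous.mul (hgc i)).continuousOn))
    (fun x _ i => hfd x i)
    (by
      have : Continuous fun x : Fin 2 → ℝ => ∑ i, f' i x (Pi.single i 1) := by
        apply continuous_finset_sum
        intro i _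
        simp only [hf', ContinuousLinearMap.add_apply, ContinuousLinearMap.smul_apply,
          smul_eq_mul]
        apply Continuous.add
        · apply (hφ.continuous).mul
          have hdgc : Continuous fun x => Dg i x (Pi.single i 1) := by
            fin_cases i
            · show Continuous fun x => DgA k1 k2 x (Pi.single 0 1)
              simp only [DgA, ContinuousLinearMap.add_apply, ContinuousLinearMap.smul_apply,
                smul_eq_mul]
              fun_prop
            · show Continuous fun x => DgB k1 k2 x (Pi.single 1 1)
              simp only [DgB, ContinuousLinearMap.add_apply, ContinuousLinearMap.smul_apply,
                smul_eq_mul]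
              fun_prop
          exact hdgc
        · exact (hgc i).mul (hφ' _)
      exact this.continuousOn.integrableOn_compact isCompact_Icc)
  -- boundary terms vanish
  have hs1 : Real.sin ((k1 : ℝ) * Real.pi) = 0 := Real.sin_int_mul_pi k1
  have hs2 : Real.sin ((k2 : ℝ) * Real.pi) = 0 := Real.sin_int_mul_pi k2
  have hzero : (∫ x in Set.Icc (fun _ : Fin 2 => (0:ℝ)) fun _ => 1,
      ∑ i, f' i x (Pi.single i 1)) = 0 := by
    rw [hdiv]
    have h0 : ∀ i : Fin 2, ∀ y : Fin 1 → ℝ, f i (Fin.insertNth i ((fun _ : Fin 2 => (1:ℝ)) i) y) = 0 := by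
      intro i y
      fin_cases i <;>
        simp [hf, hg, gA, gB, Fin.insertNth_apply_same, hs1, hs2]
    have h0' : ∀ i : Fin 2, ∀ y : Fin 1 → ℝ, f i (Fin.insertNth i ((fun _ : Fin 2 => (0:ℝ)) i) y) = 0 := by
      intro i y
      fin_cases i <;>
        simp [hf, hg, gA, gB, Fin.insertNth_apply_same]
    rw [Finset.sum_eq_zero]
    intro i _
    rw [setIntegral_congr_fun measurableSet_Icc (fun y _ => h0 i y),
      setIntegral_congr_fun measurableSet_Icc (fun y _ => h0' i y)]
    simp
  -- k^2 = c1^2 + c2^2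
  have hk2 : k ^ 2 = ((k1 : ℝ) * Real.pi) ^ 2 + ((k2 : ℝ) * Real.pi) ^ 2 := by
    rw [hk, mul_pow, Real.sq_sqrt (by positivity)]; ring
  -- pointwise identity
  have key : ∀ x : Fin 2 → ℝ,
      (1 - a) *
        (-(∑ i, fderiv ℝ (uinCos k1 k2) x (Pi.single i 1) * fderiv ℝ φ x (Pi.single i 1))
          + k ^ 2 * uinCos k1 k2 x * φ x)
      = (-(1 - a)) * ∑ i, f' i x (Pi.single i 1) := by
    intro x
    have hu : fderiv ℝ (uinCos k1 k2) x = gA k1 k2 x • P 0 + gB k1 k2 x • P 1 :=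
      (hasFDerivAt_uin k1 k2 x).fderiv
    have hP : ∀ i j : Fin 2, P i (Pi.single j 1) = if i = j then (1:ℝ) else 0 := by
      intro i j
      simp [P, Pi.single_apply]
    rw [hu, hk2]
    simp only [Fin.sum_univ_two, ContinuousLinearMap.add_apply, ContinuousLinearMap.smul_apply,
      smul_eq_mul, hP, hf', hg, hDg, Matrix.cons_val_zero, Matrix.cons_val_one, Matrix.head_cons,
      DgA, DgB]
    simp only [hP, if_true, if_false, Fin.zero_eq_one_iff, Fin.one_eq_zero_iff,
      Nat.succ_ne_self]
    unfold uinCos gA gB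
    norm_num
    ring
  -- convert the set integral
  have hset : unitSq =ᵐ[volume] Set.Icc (fun _ : Fin 2 => (0:ℝ)) (fun _ => 1) := by
    have h1 : unitSq = Set.pi Set.univ fun _ : Fin 2 => Set.Ioo (0:ℝ) 1 := by
      ext x
      simp [unitSq, Set.mem_pi, Fin.forall_fin_two]
    rw [h1, MeasureTheory.volume_pi]
    exact MeasureTheory.Measure.univ_pi_Ioo_ae_eq_Icc
  rw [setIntegral_congr_set hset]
  rw [integral_congr_ae (Filter.Eventually.of_forall fun x => key x)]
  rw [integral_const_mul, hzero, mul_zero]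
end
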